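/- Let Ω be a Cantor group (totally disconnected compact abelian topological group without isolated points) and T : Ω → Ω a minimal translation. For each f ∈ C(Ω, 𝔻), let Σ(𝓔_f) denote the spectrum of the extended CMV operator with Verblunsky coefficients α_n = f(Tⁿω). Then the set ℛ = {f ∈ C(Ω, 𝔻) : Σ(𝓔_f) has empty interior in ∂𝔻} is a G_δ subset of C(Ω, 𝔻) with the uniform topology. -/

import Mathlib

open scoped InnerProductSpace

/-- `ρₙ = √(1 - |αₙ|²)` for a sequence of Verblunsky coefficients. -/
noncomputable def cmvRho (α : ℤ → ℂ) (n : ℤ) : ℂ :=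
  ((Real.sqrt (1 - ‖α n‖ ^ 2) : ℝ) : ℂ)

/-- The `(m,k)` entry of the extended CMV matrix associated with the Verblunsky
coefficients `α : ℤ → 𝔻` (Simon, (10.5.34)-(10.5.35)). -/
noncomputable def cmvEntry (α : ℤ → ℂ) (m k : ℤ) : ℂ :=
  if Even m then
    if k = m - 1 then (starRingEnd ℂ) (α m) * cmvRho α (m - 1)
    else if k = m then -((starRingEnd ℂ) (α m)) * α (m - 1)
    else if k = m + 1 then (starRingEnd ℂ) (α (m + 1)) * cmvRho α m
    else if k = m + 2 then cmvRho α (m + 1) * cmvRho α m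
    else 0
  else
    if k = m - 2 then cmvRho α (m - 1) * cmvRho α (m - 2)
    else if k = m - 1 then -(cmvRho α (m - 1)) * α (m - 2)
    else if k = m then -((starRingEnd ℂ) (α m)) * α (m - 1)
    else if k = m + 1 then -(cmvRho α m) * α (m - 1)
    else 0


set_option maxHeartbeats 1000000

open scoped ENNReal

noncomputable abbrev Hsp := lp (fun _ : ℤ => ℂ) 2

lemma coord_eq (m : ℤ) (y : Hsp) : ⟪lp.single 2 m (1:ℂ), y⟫_ℂ = y m := by
  rw [lp.inner_single_left]; simp

lemma single_eq_smul (k : ℤ) (c : ℂ) :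
    lp.single (E := fun _ : ℤ => ℂ) 2 k c = c • lp.single 2 k (1:ℂ) := by
  have := lp.single_smul (E := fun _ : ℤ => ℂ) 2 k c (1:ℂ)
  rw [smul_eq_mul, mul_one] at this
  rw [this]

lemma sq_summable (x : Hsp) : Summable (fun m => ‖x m‖ ^ (2:ℝ)) := by
  have := lp.memℓp x
  rw [memℓp_gen_iff (by norm_num : 0 < (2:ℝ≥0∞).toReal)] at this
  simpa using this

lemma coord_formula (F : Hsp →L[ℂ] Hsp) (A : ℤ → ℤ → ℂ)
    (hFA : ∀ m k, (F (lp.single 2 k 1) : Hsp) m = A m k)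
    (hband : ∀ m k, k ∉ Finset.Icc (m-2) (m+2) → A m k = 0)
    (x : Hsp) (m : ℤ) :
    (F x : Hsp) m = ∑ k ∈ Finset.Icc (m-2) (m+2), x k * A m k := by
  have h0 : HasSum (fun k : ℤ => lp.single 2 k (x k)) x := lp.hasSum_single (by norm_num) x
  have h1 := F.hasSum h0
  have h2 := ((innerSL ℂ (lp.single 2 m (1:ℂ)))).hasSum h1
  simp only [innerSL_apply_apply, coord_eq] at h2
  have h3 : HasSum (fun k : ℤ => x k * A m k) ((F x : Hsp) m) := by
    refine h2.congr_fun fun k => ?_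
    rw [single_eq_smul, map_smul]
    simp [hFA]
  have h4 : HasSum (fun k : ℤ => x k * A m k)
      (∑ k ∈ Finset.Icc (m-2) (m+2), x k * A m k) := by
    apply hasSum_sum_of_ne_finset_zero
    intro k hk
    rw [hband m k hk, mul_zero]
  exact h3.unique h4

lemma banded_norm_bound (F : Hsp →L[ℂ] Hsp) (A : ℤ → ℤ → ℂ) (s : ℝ) (hs : 0 ≤ s)
    (hFA : ∀ m k, (F (lp.single 2 k 1) : Hsp) m = A m k)
    (hbound : ∀ m k, ‖A m k‖ ≤ s)
    (hband : ∀ m k, k ∉ Finset.Icc (m-2) (m+2) → A m k = 0) :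
    ‖F‖ ≤ 5 * s := by
  refine F.opNorm_le_bound (by positivity) fun x => ?_
  -- coordinatewise bound
  have key : ∀ m : ℤ, ‖(F x : Hsp) m‖ ^ (2:ℝ) ≤
      5 * s^2 * ∑ k ∈ Finset.Icc (m-2) (m+2), ‖x k‖ ^ (2:ℝ) := by
    intro m
    rw [coord_formula F A hFA hband x m]
    have h1 : ‖∑ k ∈ Finset.Icc (m-2) (m+2), x k * A m k‖ ≤
        ∑ k ∈ Finset.Icc (m-2) (m+2), s * ‖x k‖ := by
      refine (norm_sum_le _ _).trans (Finset.sum_le_sum fun k _ => ?_)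
      rw [norm_mul]
      calc ‖x k‖ * ‖A m k‖ ≤ ‖x k‖ * s := by
            exact mul_le_mul_of_nonneg_left (hbound m k) (norm_nonneg _)
        _ = s * ‖x k‖ := mul_comm _ _
    have h2 : (∑ k ∈ Finset.Icc (m-2) (m+2), s * ‖x k‖) ^ 2 ≤
        (Finset.Icc (m-2) (m+2) : Finset ℤ).card * ∑ k ∈ Finset.Icc (m-2) (m+2), (s * ‖x k‖)^2 :=
      sq_sum_le_card_mul_sum_sq
    have hcard : ((Finset.Icc (m-2) (m+2) : Finset ℤ).card : ℝ) = 5 := by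
      rw [Int.card_Icc]
      have : m + 2 + 1 - (m - 2) = 5 := by ring
      rw [this]; rfl
    rw [Real.rpow_two]
    calc ‖∑ k ∈ Finset.Icc (m-2) (m+2), x k * A m k‖ ^ 2
        ≤ (∑ k ∈ Finset.Icc (m-2) (m+2), s * ‖x k‖) ^ 2 := by
          apply pow_le_pow_left₀ (norm_nonneg _) h1
      _ ≤ 5 * ∑ k ∈ Finset.Icc (m-2) (m+2), (s * ‖x k‖)^2 := by
          rw [← hcard]; exact_mod_cast h2
      _ = 5 * s^2 * ∑ k ∈ Finset.Icc (m-2) (m+2), ‖x k‖ ^ (2:ℝ) := by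
          rw [Finset.mul_sum, Finset.mul_sum]
          refine Finset.sum_congr rfl fun k _ => ?_
          rw [mul_pow, Real.rpow_two]
          ring
  have hnorm : ‖F x‖ ^ (2:ℝ) = ∑' m, ‖(F x : Hsp) m‖ ^ (2:ℝ) := by
    simpa using lp.norm_rpow_eq_tsum (p := 2) (by norm_num) (F x)
  have hxnorm : ‖x‖ ^ (2:ℝ) = ∑' m, ‖x m‖ ^ (2:ℝ) := by
    simpa using lp.norm_rpow_eq_tsum (p := 2) (by norm_num) x
  have hsum_shift : ∀ j : ℤ, Summable (fun m : ℤ => ‖x (m + j)‖ ^ (2:ℝ)) := by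
    intro j
    exact ((Equiv.addRight j).summable_iff (f := fun m : ℤ => ‖x m‖ ^ (2:ℝ))).2 (sq_summable x)
  have htsum_shift : ∀ j : ℤ, (∑' m : ℤ, ‖x (m + j)‖ ^ (2:ℝ)) = ‖x‖ ^ (2:ℝ) := by
    intro j
    rw [hxnorm]
    exact (Equiv.addRight j).tsum_eq (fun m : ℤ => ‖x m‖ ^ (2:ℝ))
  have hIcc : ∀ m : ℤ, (∑ k ∈ Finset.Icc (m-2) (m+2), ‖x k‖ ^ (2:ℝ))
      = ∑ j ∈ Finset.Icc (-2:ℤ) 2, ‖x (m+j)‖ ^ (2:ℝ) := by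
    intro m
    rw [show (m - 2 : ℤ) = m + (-2) by ring, show (m + 2 : ℤ) = m + 2 from rfl,
      ← Finset.map_add_left_Icc, Finset.sum_map]
    rfl
  have hb : Summable (fun m : ℤ => 5*s^2 * ∑ j ∈ Finset.Icc (-2:ℤ) 2, ‖x (m+j)‖ ^ (2:ℝ)) :=
    (summable_sum (fun j _ => hsum_shift j)).mul_left _
  have hle : (∑' m : ℤ, ‖(F x : Hsp) m‖ ^ (2:ℝ)) ≤
      ∑' m : ℤ, 5*s^2 * ∑ j ∈ Finset.Icc (-2:ℤ) 2, ‖x (m+j)‖ ^ (2:ℝ) :=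
    Summable.tsum_le_tsum (fun m => by rw [← hIcc m]; exact key m) (sq_summable (F x)) hb
  have heq : (∑' m : ℤ, 5*s^2 * ∑ j ∈ Finset.Icc (-2:ℤ) 2, ‖x (m+j)‖ ^ (2:ℝ))
      = 25 * s^2 * ‖x‖ ^ (2:ℝ) := by
    rw [tsum_mul_left, Summable.tsum_finsetSum (fun j _ => hsum_shift j),
      Finset.sum_congr rfl (fun j _ => htsum_shift j), Finset.sum_const]
    have hc : (Finset.Icc (-2:ℤ) 2).card = 5 := by decide
    rw [hc]
    ring_nf
  have hfinal : ‖F x‖ ^ (2:ℝ) ≤ (5 * s * ‖x‖) ^ (2:ℝ) := by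
    rw [hnorm]
    calc (∑' m : ℤ, ‖(F x : Hsp) m‖ ^ (2:ℝ)) ≤ 25 * s^2 * ‖x‖ ^ (2:ℝ) := heq ▸ hle
      _ = (5 * s * ‖x‖) ^ (2:ℝ) := by rw [Real.rpow_two, Real.rpow_two]; ring
  rw [Real.rpow_two, Real.rpow_two] at hfinal
  have h1 := Real.sqrt_le_sqrt hfinal
  rwa [Real.sqrt_sq (norm_nonneg _), Real.sqrt_sq (by positivity)] at h1

lemma sqrt_sub_sqrt_le {A B : ℝ} (hB : 0 ≤ B) (hBA : B ≤ A) :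
    Real.sqrt A - Real.sqrt B ≤ Real.sqrt (A - B) := by
  have hA : 0 ≤ A := hB.trans hBA
  have h2 : A ≤ (Real.sqrt B + Real.sqrt (A - B))^2 := by
    nlinarith [Real.sq_sqrt hB, Real.sq_sqrt (sub_nonneg.2 hBA), Real.sqrt_nonneg B,
      Real.sqrt_nonneg (A - B), mul_nonneg (Real.sqrt_nonneg B) (Real.sqrt_nonneg (A - B))]
  have := (Real.sqrt_le_sqrt h2).trans_eq (Real.sqrt_sq (by positivity))
  linarith

lemma abs_sqrt_sub_sqrt_le {A B : ℝ} (hA : 0 ≤ A) (hB : 0 ≤ B) :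
    |Real.sqrt A - Real.sqrt B| ≤ Real.sqrt |A - B| := by
  rcases le_total B A with h | h
  · rw [abs_of_nonneg (by linarith [Real.sqrt_le_sqrt h] : (0:ℝ) ≤ _),
      abs_of_nonneg (by linarith)]
    exact sqrt_sub_sqrt_le hB h
  · rw [abs_of_nonpos (by linarith [Real.sqrt_le_sqrt h] : _ ≤ (0:ℝ)),
      abs_of_nonpos (by linarith), neg_sub, neg_sub]
    exact sqrt_sub_sqrt_le hA h

lemma cmvRho_norm_le (α : ℤ → ℂ) (n : ℤ) : ‖cmvRho α n‖ ≤ 1 := by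
  rw [cmvRho, Complex.norm_real, Real.norm_eq_abs, abs_of_nonneg (Real.sqrt_nonneg _)]
  exact Real.sqrt_le_one.2 (by nlinarith [norm_nonneg (α n)])

lemma cmvRho_diff (α β : ℤ → ℂ) (n : ℤ) (hα : ‖α n‖ ≤ 1) (hβ : ‖β n‖ ≤ 1)
    {d : ℝ} (hd : ‖α n - β n‖ ≤ d) :
    ‖cmvRho α n - cmvRho β n‖ ≤ Real.sqrt (2 * d) := by
  rw [cmvRho, cmvRho, ← Complex.ofReal_sub, Complex.norm_real, Real.norm_eq_abs]
  have hA : (0:ℝ) ≤ 1 - ‖α n‖ ^ 2 := by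
    nlinarith [norm_nonneg (α n)]
  have hB : (0:ℝ) ≤ 1 - ‖β n‖ ^ 2 := by
    nlinarith [norm_nonneg (β n)]
  refine (abs_sqrt_sub_sqrt_le hA hB).trans (Real.sqrt_le_sqrt ?_)
  have h1 : |‖α n‖ - ‖β n‖| ≤ ‖α n - β n‖ := by
    exact abs_norm_sub_norm_le _ _
  have h0α := norm_nonneg (α n); have h0β := norm_nonneg (β n)
  have : |(1 - ‖α n‖ ^ 2) - (1 - ‖β n‖ ^ 2)| = |‖β n‖ - ‖α n‖| * (‖β n‖ + ‖α n‖) := by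
    rw [← abs_of_nonneg (by positivity : (0:ℝ) ≤ ‖β n‖ + ‖α n‖), ← abs_mul]
    ring_nf
  rw [this]
  have h2 : |‖β n‖ - ‖α n‖| ≤ d := by
    rw [abs_sub_comm]; exact h1.trans hd
  have h3 : ‖β n‖ + ‖α n‖ ≤ 2 := by linarith
  calc |‖β n‖ - ‖α n‖| * (‖β n‖ + ‖α n‖) ≤ d * 2 := by
        exact mul_le_mul h2 h3 (by positivity) ((abs_nonneg _).trans h2)
    _ = 2 * d := by ring

lemma prod_diff_bound (u₁ u₂ v₁ v₂ : ℂ) (h₁ : ‖u₁‖ ≤ 1) (h₂ : ‖v₂‖ ≤ 1) {e : ℝ}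
    (hd₁ : ‖u₁ - v₁‖ ≤ e) (hd₂ : ‖u₂ - v₂‖ ≤ e) : ‖u₁*u₂ - v₁*v₂‖ ≤ 2*e := by
  have : u₁*u₂ - v₁*v₂ = u₁*(u₂ - v₂) + (u₁ - v₁)*v₂ := by ring
  rw [this]
  have he : 0 ≤ e := (norm_nonneg _).trans hd₁
  calc ‖u₁*(u₂ - v₂) + (u₁ - v₁)*v₂‖ ≤ ‖u₁*(u₂-v₂)‖ + ‖(u₁-v₁)*v₂‖ := norm_add_le _ _
    _ ≤ 1 * e + e * 1 := by
        rw [norm_mul, norm_mul]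
        exact add_le_add (mul_le_mul h₁ hd₂ (norm_nonneg _) zero_le_one)
          (mul_le_mul hd₁ h₂ (norm_nonneg _) he)
    _ = 2*e := by ring

lemma cmvEntry_diff (α β : ℤ → ℂ) (hα : ∀ n, ‖α n‖ ≤ 1) (hβ : ∀ n, ‖β n‖ ≤ 1)
    {e : ℝ} (hdα : ∀ n, ‖α n - β n‖ ≤ e) (hdρ : ∀ n, ‖cmvRho α n - cmvRho β n‖ ≤ e)
    (m k : ℤ) : ‖cmvEntry α m k - cmvEntry β m k‖ ≤ 2*e := by
  have he : 0 ≤ e := (norm_nonneg _).trans (hdα 0)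
  have hconj : ∀ n, ‖(starRingEnd ℂ) (α n) - (starRingEnd ℂ) (β n)‖ ≤ e := fun n => by
    rw [← map_sub (starRingEnd ℂ) (α n) (β n), Complex.norm_conj]
    exact hdα n
  have hconjn : ∀ n, ‖(starRingEnd ℂ) (α n)‖ ≤ 1 := fun n => by
    rw [Complex.norm_conj]; exact hα n
  have hneg : ∀ u v : ℂ, ‖u - v‖ ≤ e → ‖-u - -v‖ ≤ e := fun u v h => by
    rw [neg_sub_neg, norm_sub_rev]; exact h
  unfold cmvEntry
  split_ifs
  · exact prod_diff_bound _ _ _ _ (hconjn m) (cmvRho_norm_le β (m-1)) (hconj m) (hdρ (m-1))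
  · exact prod_diff_bound _ _ _ _ (by rw [norm_neg]; exact hconjn m) (hβ (m-1))
      (hneg _ _ (hconj m)) (hdα (m-1))
  · exact prod_diff_bound _ _ _ _ (hconjn (m+1)) (cmvRho_norm_le β m) (hconj (m+1)) (hdρ m)
  · exact prod_diff_bound _ _ _ _ (cmvRho_norm_le α (m+1)) (cmvRho_norm_le β m)
      (hdρ (m+1)) (hdρ m)
  · simp only [sub_self, norm_zero]; positivity
  · exact prod_diff_bound _ _ _ _ (cmvRho_norm_le α (m-1)) (cmvRho_norm_le β (m-2))
      (hdρ (m-1)) (hdρ (m-2))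
  · exact prod_diff_bound _ _ _ _ (by rw [norm_neg]; exact cmvRho_norm_le α (m-1)) (hβ (m-2))
      (hneg _ _ (hdρ (m-1))) (hdα (m-2))
  · exact prod_diff_bound _ _ _ _ (by rw [norm_neg]; exact hconjn m) (hβ (m-1))
      (hneg _ _ (hconj m)) (hdα (m-1))
  · exact prod_diff_bound _ _ _ _ (by rw [norm_neg]; exact cmvRho_norm_le α m) (hβ (m-1))
      (hneg _ _ (hdρ m)) (hdα (m-1))
  · simp only [sub_self, norm_zero]; positivity

lemma cmvEntry_band (α : ℤ → ℂ) (m k : ℤ) (hk : k ∉ Finset.Icc (m-2) (m+2)) :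
    cmvEntry α m k = 0 := by
  rw [Finset.mem_Icc] at hk
  unfold cmvEntry
  split_ifs <;> first | rfl | omega

/-- Let `Ω` be a Cantor group (totally disconnected compact abelian topological group
without isolated points) and `T : ω ↦ ω + a` a minimal translation.  For each sampling
function `f` in `C(Ω, 𝔻)` (realized as the subtype of `C(Ω, ℂ)` of maps into the open
unit disk), let `E f` be the extended CMV operator on `ℓ²(ℤ)` with Verblunsky
coefficients `αₙ = f(Tⁿω)`.  Then
`ℛ = {f : Σ(E f) has empty interior in ∂𝔻}` is a `G_δ` subset of `C(Ω, 𝔻)`. -/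
theorem cantor_spectrum_Gdelta
    {Ω : Type*} [TopologicalSpace Ω] [CompactSpace Ω] [AddCommGroup Ω]
    [IsTopologicalAddGroup Ω] [TotallyDisconnectedSpace Ω]
    (hperf : ∀ x : Ω, ¬IsOpen ({x} : Set Ω))
    (a : Ω) (hmin : ∀ ω : Ω, Dense (Set.range fun n : ℤ => ω + n • a))
    (ω : Ω)
    (E : {f : C(Ω, ℂ) // ∀ x, ‖f x‖ < 1} →
      (lp (fun _ : ℤ => ℂ) 2 →L[ℂ] lp (fun _ : ℤ => ℂ) 2))
    (hE : ∀ f, ∀ m k : ℤ,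
      ⟪lp.single 2 m (1 : ℂ), E f (lp.single 2 k 1)⟫_ℂ =
        cmvEntry (fun n => (f : C(Ω, ℂ)) (ω + n • a)) m k)
    (hEunitary : ∀ f, E f ∈ unitary (lp (fun _ : ℤ => ℂ) 2 →L[ℂ] lp (fun _ : ℤ => ℂ) 2)) :
    IsGδ {f : {f : C(Ω, ℂ) // ∀ x, ‖f x‖ < 1} |
      interior ((fun z : Metric.sphere (0 : ℂ) 1 => (z : ℂ)) ⁻¹' spectrum ℂ (E f)) = ∅} := by
  classical
  have hEcont : Continuous E := by
    rw [Metric.continuous_iff]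
    intro f ε hε
    refine ⟨min 2 (ε^2/800), by positivity, fun g hg => ?_⟩
    set d := dist g f with hddef
    have hd0 : (0:ℝ) ≤ d := dist_nonneg
    have hd2 : d < 2 := lt_of_lt_of_le hg (min_le_left _ _)
    have hdε : d < ε^2/800 := lt_of_lt_of_le hg (min_le_right _ _)
    set e : ℝ := d + Real.sqrt (2*d) with hedef
    have hsq0 : (0:ℝ) ≤ Real.sqrt (2*d) := Real.sqrt_nonneg _
    have hαg : ∀ n : ℤ, ‖(g : C(Ω, ℂ)) (ω + n • a)‖ ≤ 1 := fun n => by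
      exact (g.2 _).le
    have hαf : ∀ n : ℤ, ‖(f : C(Ω, ℂ)) (ω + n • a)‖ ≤ 1 := fun n => by
      exact (f.2 _).le
    have hdα : ∀ n : ℤ, ‖(g : C(Ω,ℂ)) (ω + n • a) - (f : C(Ω,ℂ)) (ω + n • a)‖ ≤ d := by
      intro n
      rw [← dist_eq_norm]
      calc dist ((g : C(Ω,ℂ)) (ω + n • a)) ((f : C(Ω,ℂ)) (ω + n • a))
          ≤ dist (g : C(Ω,ℂ)) (f : C(Ω,ℂ)) := ContinuousMap.dist_apply_le_dist _
        _ = d := (Subtype.dist_eq g f).symm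
    have hdαe : ∀ n : ℤ, ‖(g : C(Ω,ℂ)) (ω + n • a) - (f : C(Ω,ℂ)) (ω + n • a)‖ ≤ e :=
      fun n => (hdα n).trans (by rw [hedef]; linarith)
    have hdρ : ∀ n : ℤ, ‖cmvRho (fun n => (g:C(Ω,ℂ)) (ω + n • a)) n
        - cmvRho (fun n => (f:C(Ω,ℂ)) (ω + n • a)) n‖ ≤ e := fun n =>
      (cmvRho_diff (fun n => (g:C(Ω,ℂ)) (ω + n • a)) (fun n => (f:C(Ω,ℂ)) (ω + n • a)) n (hαg n) (hαf n) (hdα n)).trans (by rw [hedef]; linarith)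
    have hentry := cmvEntry_diff (fun n => (g:C(Ω,ℂ)) (ω + n • a)) (fun n => (f:C(Ω,ℂ)) (ω + n • a)) hαg hαf hdαe hdρ
    have hFA : ∀ m k : ℤ, ((E g - E f) (lp.single 2 k 1) : Hsp) m
        = cmvEntry (fun n => (g:C(Ω,ℂ)) (ω + n • a)) m k
          - cmvEntry (fun n => (f:C(Ω,ℂ)) (ω + n • a)) m k := by
      intro m k
      have h1 : (E g (lp.single 2 k 1) : Hsp) m
          = cmvEntry (fun n => (g:C(Ω,ℂ)) (ω + n • a)) m k := by
        rw [← coord_eq]; exact hE g m k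
      have h2 : (E f (lp.single 2 k 1) : Hsp) m
          = cmvEntry (fun n => (f:C(Ω,ℂ)) (ω + n • a)) m k := by
        rw [← coord_eq]; exact hE f m k
      simp only [ContinuousLinearMap.sub_apply, lp.coeFn_sub, Pi.sub_apply]
      rw [h1, h2]
    have hnorm := banded_norm_bound (E g - E f) (fun m k => cmvEntry (fun n => (g:C(Ω,ℂ)) (ω + n • a)) m k - cmvEntry (fun n => (f:C(Ω,ℂ)) (ω + n • a)) m k) (2*e) (by positivity) hFA
      (fun m k => hentry m k)
      (fun m k hk => by
        show cmvEntry (fun n => (g:C(Ω,ℂ)) (ω + n • a)) m k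
          - cmvEntry (fun n => (f:C(Ω,ℂ)) (ω + n • a)) m k = 0
        rw [cmvEntry_band _ _ _ hk, cmvEntry_band _ _ _ hk, sub_zero])
    have hde : d ≤ Real.sqrt (2*d) := by
      rw [Real.le_sqrt hd0 (by positivity)]
      nlinarith
    have hsb : Real.sqrt (2*d) < ε/20 := by
      have h1 : 2*d < (ε/20)^2 := by nlinarith
      have h2 := Real.sqrt_lt_sqrt (by positivity) h1
      rwa [Real.sqrt_sq (by positivity)] at h2
    rw [dist_eq_norm]
    calc ‖E g - E f‖ ≤ 5 * (2*e) := hnorm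
      _ ≤ 20 * Real.sqrt (2*d) := by rw [hedef]; linarith
      _ < ε := by linarith
  obtain ⟨B, hBc, hBne, hB⟩ := TopologicalSpace.exists_countable_basis (Metric.sphere (0:ℂ) 1)
  have hset : {f : {f : C(Ω, ℂ) // ∀ x, ‖f x‖ < 1} |
      interior ((fun z : Metric.sphere (0 : ℂ) 1 => (z : ℂ)) ⁻¹' spectrum ℂ (E f)) = ∅}
      = ⋂ U ∈ B, {f | ∃ z ∈ U, (z : ℂ) ∉ spectrum ℂ (E f)} := by
    ext f
    simp only [Set.mem_setOf_eq, Set.mem_iInter]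
    constructor
    · intro h U hU
      by_contra hc
      push_neg at hc
      have hsub : U ⊆ (fun z : Metric.sphere (0 : ℂ) 1 => (z : ℂ)) ⁻¹' spectrum ℂ (E f) :=
        fun z hz => hc z hz
      have hUo : IsOpen U := hB.isOpen hU
      have : U ⊆ interior ((fun z : Metric.sphere (0 : ℂ) 1 => (z : ℂ)) ⁻¹' spectrum ℂ (E f)) :=
        interior_maximal hsub hUo
      rw [h] at this
      exact hBne (Set.subset_empty_iff.1 this ▸ hU)
    · intro h
      by_contra hne
      obtain ⟨z, hz⟩ := Set.nonempty_iff_ne_empty.2 hne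
      obtain ⟨U, hU, hzU, hUsub⟩ := hB.exists_subset_of_mem_open hz isOpen_interior
      obtain ⟨w, hwU, hw⟩ := h U hU
      have hmem : w ∈ (fun z : Metric.sphere (0 : ℂ) 1 => (z : ℂ)) ⁻¹' spectrum ℂ (E f) :=
        interior_subset (hUsub hwU)
      exact hw hmem
  rw [hset]
  refine IsGδ.biInter hBc fun U _ => IsOpen.isGδ ?_
  have hUnion : {f : {f : C(Ω, ℂ) // ∀ x, ‖f x‖ < 1} |
      ∃ z ∈ U, (z : ℂ) ∉ spectrum ℂ (E f)}
      = ⋃ z ∈ U, {f | (z : ℂ) ∉ spectrum ℂ (E f)} := by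
    ext f; simp
  rw [hUnion]
  refine isOpen_biUnion fun z _ => ?_
  have h1 : IsOpen {T : Hsp →L[ℂ] Hsp | (z : ℂ) ∉ spectrum ℂ T} := by
    have h2 : {T : Hsp →L[ℂ] Hsp | (z : ℂ) ∉ spectrum ℂ T}
        = (fun T : Hsp →L[ℂ] Hsp => algebraMap ℂ (Hsp →L[ℂ] Hsp) (z : ℂ) - T) ⁻¹'
          {x | IsUnit x} := by
      ext T
      simp [spectrum.notMem_iff]
    rw [h2]
    exact Units.isOpen.preimage (continuous_const.sub continuous_id)
  exact h1.preimage hEcont
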